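/- Theorem 2.2, first part: Suppose the kernel k is homogeneous of degree β−1 for some β>0, i.e., k(t,ts)=t^{β−1}k(1,s) for all t>0 and s∈(0,1), and that k(1,·)∈L^{1+ε}((0,1)) for some ε>0. Then k satisfies Assumption (K) and the continuity assumption (for a.e. s∈(0,1) the map t↦k(t,ts) is continuous on (0,∞)); moreover c_n(t)=ĉ_n t^{nβ} for all n∈ℕ and t≥0, where ĉ_0=1 and ĉ_n=ĉ_{n−1}∫_0^1 k(1,s)s^{β(n−1)}ds for n≥1; consequently Φ(t,λ)=Φ̂(λt^β) for all t≥0 and λ∈ℂ, where Φ̂(λ):=∑_{n=0}^∞ ĉ_n λ^n. -/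

import Mathlib

open MeasureTheory Filter

noncomputable section

def AssumptionK (k : ℝ → ℝ → ℝ) : Prop :=
  Measurable (Function.uncurry k) ∧
  ∃ α ε : ℝ, 0 ≤ α ∧ α < 1 ∧ 0 < ε ∧
    ∀ T : ℝ, 0 < T → ∃ KT : ℝ,
      ∀ t : ℝ, 0 < t → t ≤ T →
        MeasureTheory.IntegrableOn (fun s => |k t s| ^ (1 + ε)) (Set.Ioc 0 t) ∧
        t ^ (α - 1 / (1 + ε)) *
          (∫ s in Set.Ioc (0:ℝ) t, |k t s| ^ (1 + ε)) ^ (1 / (1 + ε)) ≤ KT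

noncomputable def coeff (k : ℝ → ℝ → ℝ) : ℕ → ℝ → ℝ
  | 0, _ => 1
  | n + 1, t => if 0 < t then ∫ s in Set.Ioc (0:ℝ) t, k t s * coeff k n s else 0

noncomputable def Phi (k : ℝ → ℝ → ℝ) (t : ℝ) (l : ℂ) : ℂ :=
  ∑' n : ℕ, (coeff k n t : ℂ) * l ^ n

noncomputable def PhiR (k : ℝ → ℝ → ℝ) (t : ℝ) (x : ℝ) : ℝ :=
  ∑' n : ℕ, coeff k n t * x ^ n

noncomputable def chat (k : ℝ → ℝ → ℝ) (β : ℝ) : ℕ → ℝ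
  | 0 => 1
  | n + 1 => chat k β n * ∫ s in Set.Ioc (0:ℝ) 1, k 1 s * s ^ (β * (n : ℝ))

noncomputable def PhiHatC (k : ℝ → ℝ → ℝ) (β : ℝ) (z : ℂ) : ℂ :=
  ∑' n : ℕ, (chat k β n : ℂ) * z ^ n

noncomputable def PhiHatR (k : ℝ → ℝ → ℝ) (β : ℝ) (x : ℝ) : ℝ :=
  ∑' n : ℕ, chat k β n * x ^ n

lemma scale_integral (f : ℝ → ℝ) {t : ℝ} (ht : 0 < t) :
    ∫ s in Set.Ioc (0:ℝ) t, f s = t * ∫ u in Set.Ioc (0:ℝ) 1, f (t * u) := by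
  rw [← intervalIntegral.integral_of_le ht.le,
    ← intervalIntegral.integral_of_le (zero_le_one (α := ℝ)),
    intervalIntegral.integral_comp_mul_left f ht.ne', mul_zero, mul_one, smul_eq_mul,
    ← mul_assoc, mul_inv_cancel₀ ht.ne', one_mul]

lemma scale_integrableOn {f : ℝ → ℝ} {t : ℝ} (ht : 0 < t)
    (hf : MeasureTheory.IntegrableOn f (Set.Ioc (0:ℝ) 1)) :
    MeasureTheory.IntegrableOn (fun s => f (t⁻¹ * s)) (Set.Ioc 0 t) := by
  have h1 : IntervalIntegrable f volume 0 1 := by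
    rw [intervalIntegrable_iff, Set.uIoc_of_le (zero_le_one (α := ℝ))]; exact hf
  have h2 := h1.comp_mul_left (c := t⁻¹)
  rw [zero_div, one_div, inv_inv] at h2
  rw [intervalIntegrable_iff, Set.uIoc_of_le ht.le] at h2
  exact h2

theorem stmt8 (k : ℝ → ℝ → ℝ) (β : ℝ) (hβ : 0 < β)
    (hkm : Measurable (Function.uncurry k))
    (hhom : ∀ t : ℝ, 0 < t → ∀ s ∈ Set.Ioo (0:ℝ) 1, k t (t * s) = t ^ (β - 1) * k 1 s)
    (ε : ℝ) (hε : 0 < ε)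
    (hkL : MeasureTheory.IntegrableOn (fun s => |k 1 s| ^ (1 + ε)) (Set.Ioo 0 1)) :
    AssumptionK k ∧
    (∀ᵐ s ∂(MeasureTheory.volume.restrict (Set.Ioo (0:ℝ) 1)),
      ContinuousOn (fun t => k t (t * s)) (Set.Ioi 0)) ∧
    (∀ n : ℕ, ∀ t : ℝ, 0 ≤ t → coeff k n t = chat k β n * t ^ ((n : ℝ) * β)) ∧
    (∀ t : ℝ, 0 ≤ t → ∀ l : ℂ, Phi k t l = PhiHatC k β (l * ((t ^ β : ℝ) : ℂ))) := by
  have key : ∀ t : ℝ, 0 < t → ∀ s ∈ Set.Ioo (0:ℝ) t, k t s = t ^ (β - 1) * k 1 (t⁻¹ * s) := by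
    intro t ht s hs
    have hu : t⁻¹ * s ∈ Set.Ioo (0:ℝ) 1 := by
      constructor
      · exact mul_pos (inv_pos.mpr ht) hs.1
      · rw [← div_eq_inv_mul]; exact (div_lt_one ht).mpr hs.2
    have := hhom t ht (t⁻¹ * s) hu
    rwa [mul_inv_cancel_left₀ ht.ne'] at this
  have keyae : ∀ t : ℝ, 0 < t →
      ∀ᵐ s ∂(volume.restrict (Set.Ioc (0:ℝ) t)), k t s = t ^ (β - 1) * k 1 (t⁻¹ * s) := by
    intro t ht
    rw [← MeasureTheory.restrict_Ioo_eq_restrict_Ioc]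
    filter_upwards [ae_restrict_mem measurableSet_Ioo] with s hs
    exact key t ht s hs
  have part3 : ∀ n : ℕ, ∀ t : ℝ, 0 ≤ t → coeff k n t = chat k β n * t ^ ((n : ℝ) * β) := by
    intro n
    induction n with
    | zero => intro t ht; simp [coeff, chat]
    | succ n ih =>
      intro t ht
      rcases eq_or_lt_of_le ht with h | h
      · have hne : (((n + 1 : ℕ) : ℝ)) * β ≠ 0 :=
          ne_of_gt (mul_pos (by exact_mod_cast Nat.succ_pos n) hβ)
        rw [← h]
        show (if (0:ℝ) < 0 then _ else 0) = _
        rw [if_neg (lt_irrefl 0), Real.zero_rpow hne, mul_zero]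
      · show (if 0 < t then ∫ s in Set.Ioc (0:ℝ) t, k t s * coeff k n s else 0) = _
        rw [if_pos h]
        have hcongr : ∀ᵐ s ∂(volume.restrict (Set.Ioc (0:ℝ) t)),
            k t s * coeff k n s
              = (t ^ (β - 1) * chat k β n) * (k 1 (t⁻¹ * s) * s ^ ((n : ℝ) * β)) := by
          filter_upwards [keyae t h, ae_restrict_mem measurableSet_Ioc] with s h1 h2
          rw [h1, ih s h2.1.le]; ring
        rw [integral_congr_ae hcongr, MeasureTheory.integral_const_mul,
          scale_integral (fun s => k 1 (t⁻¹ * s) * s ^ ((n : ℝ) * β)) h]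
        simp_rw [inv_mul_cancel_left₀ h.ne']
        have h2 : ∫ u in Set.Ioc (0:ℝ) 1, k 1 u * (t * u) ^ ((n : ℝ) * β)
            = t ^ ((n : ℝ) * β) * ∫ u in Set.Ioc (0:ℝ) 1, k 1 u * u ^ (β * (n : ℝ)) := by
          rw [← MeasureTheory.integral_const_mul]
          refine integral_congr_ae ?_
          filter_upwards [ae_restrict_mem measurableSet_Ioc] with u hu
          rw [Real.mul_rpow h.le hu.1.le, mul_comm β (n : ℝ)]; ring
        rw [h2]
        have hpow : t ^ (β - 1) * (t * t ^ ((n : ℝ) * β)) = t ^ ((((n + 1) : ℕ) : ℝ) * β) := by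
          have he : ((((n + 1) : ℕ) : ℝ)) * β = (β - 1) + (1 + (n : ℝ) * β) := by
            push_cast; ring
          rw [he, Real.rpow_add h, Real.rpow_add h, Real.rpow_one]
        rw [← hpow]
        show _ = chat k β n * (∫ s in Set.Ioc (0:ℝ) 1, k 1 s * s ^ (β * (n : ℝ))) * _
        ring
  refine ⟨⟨hkm, max (1 - β) 0, ε, le_max_right _ _, ?_, hε, ?_⟩, ?_, part3, ?_⟩
  · exact max_lt (by linarith) one_pos
  · intro T hT
    set α : ℝ := max (1 - β) 0 with hα
    set C : ℝ := ∫ u in Set.Ioc (0:ℝ) 1, |k 1 u| ^ (1 + ε) with hCdef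
    have hC : 0 ≤ C :=
      integral_nonneg fun u => Real.rpow_nonneg (abs_nonneg _) _
    have he0 : 0 ≤ α + β - 1 := by
      have := le_max_left (1 - β) 0; simp only [← hα] at this; linarith
    refine ⟨T ^ (α + β - 1) * C ^ (1 / (1 + ε)), fun t ht htT => ?_⟩
    have hf1 : IntegrableOn (fun u => |k 1 u| ^ (1 + ε)) (Set.Ioc (0:ℝ) 1) :=
      (integrableOn_Ioc_iff_integrableOn_Ioo).mpr hkL
    have heq : (fun s => |k t s| ^ (1 + ε)) =ᵐ[volume.restrict (Set.Ioc (0:ℝ) t)]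
        fun s => (t ^ (β - 1)) ^ (1 + ε) * |k 1 (t⁻¹ * s)| ^ (1 + ε) := by
      filter_upwards [keyae t ht] with s hs
      rw [hs, abs_mul, abs_of_nonneg (Real.rpow_nonneg ht.le _),
        Real.mul_rpow (Real.rpow_nonneg ht.le _) (abs_nonneg _)]
    have hint : IntegrableOn (fun s => |k t s| ^ (1 + ε)) (Set.Ioc (0:ℝ) t) :=
      (((scale_integrableOn ht hf1).const_mul _).congr heq.symm)
    refine ⟨hint, ?_⟩
    have hval : ∫ s in Set.Ioc (0:ℝ) t, |k t s| ^ (1 + ε)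
        = t ^ ((β - 1) * (1 + ε) + 1) * C := by
      rw [integral_congr_ae heq, MeasureTheory.integral_const_mul,
        scale_integral (fun s => |k 1 (t⁻¹ * s)| ^ (1 + ε)) ht]
      simp_rw [inv_mul_cancel_left₀ ht.ne']
      rw [← Real.rpow_mul ht.le, Real.rpow_add ht, Real.rpow_one, ← hCdef]
      ring
    rw [hval, Real.mul_rpow (Real.rpow_nonneg ht.le _) hC, ← Real.rpow_mul ht.le,
      ← mul_assoc, ← Real.rpow_add ht]
    have h1e : (1:ℝ) + ε ≠ 0 := by positivity
    have hee : α - 1 / (1 + ε) + ((β - 1) * (1 + ε) + 1) * (1 / (1 + ε)) = α + β - 1 := by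
      field_simp
      ring
    rw [hee]
    exact mul_le_mul_of_nonneg_right (Real.rpow_le_rpow ht.le htT he0)
      (Real.rpow_nonneg hC _)
  · filter_upwards [ae_restrict_mem measurableSet_Ioo] with s hs
    have hcont : ContinuousOn (fun t : ℝ => t ^ (β - 1) * k 1 s) (Set.Ioi 0) := by
      apply ContinuousOn.mul ?_ continuousOn_const
      intro x hx
      exact (Real.continuousAt_rpow_const x (β - 1) (Or.inl (ne_of_gt hx))).continuousWithinAt
    exact hcont.congr fun t ht => hhom t ht s hs
  · intro t ht l
    unfold Phi PhiHatC
    refine tsum_congr fun n => ?_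
    rw [part3 n t ht]
    have hp : t ^ ((n : ℝ) * β) = (t ^ β) ^ n := by
      rw [mul_comm, Real.rpow_mul ht, Real.rpow_natCast]
    rw [hp]
    push_cast
    ring
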